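/- Let T, T_1, ..., T_m be real-valued random variables such that (T, T_1,...,T_m) is exchangeable and almost surely all values are distinct. Define the Monte Carlo p-value p̂ = (1 + #{i : T < T_i})/(m+1). Then for every α ∈ [0,1], P(p̂ ≤ α) ≤ α. -/

import Mathlib

open MeasureTheory ProbabilityTheory Finset ENNReal

namespace Stmt4Aux

variable {m : ℕ}

/-- number of strictly larger coordinates -/
noncomputable def g (i : Fin (m + 1)) (y : Fin (m + 1) → ℝ) : ℕ :=
  (Finset.univ.filter fun j => y i < y j).card

lemma g_strict {y : Fin (m + 1) → ℝ} {i i' : Fin (m + 1)} (h : y i < y i') :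
    g i' y < g i y := by
  apply Finset.card_lt_card
  constructor
  · intro j hj
    simp only [Finset.mem_filter, Finset.mem_univ, true_and] at *
    exact h.trans hj
  · intro hsub
    have := hsub (by simp [Finset.mem_filter, h] : i' ∈ Finset.univ.filter fun j => y i < y j)
    simp [Finset.mem_filter] at this

lemma g_inj {y : Fin (m + 1) → ℝ} (hy : Function.Injective y) :
    Function.Injective (fun i => g i y) := by
  intro i i' h
  simp only at h
  by_contra hne
  have hyy : y i ≠ y i' := fun e => hne (hy e)
  rcases hyy.lt_or_gt with hlt | hlt
  · exact absurd h (by have := g_strict (y := y) hlt; omega)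
  · exact absurd h (by have := g_strict (y := y) hlt; omega)

lemma g_le (i : Fin (m + 1)) (y : Fin (m + 1) → ℝ) : g i y ≤ m := by
  have : (Finset.univ.filter fun j => y i < y j) ⊆ Finset.univ.erase i := by
    intro j hj
    simp only [Finset.mem_filter, Finset.mem_univ, true_and] at hj
    simp only [Finset.mem_erase, Finset.mem_univ, and_true]
    rintro rfl; exact lt_irrefl _ hj
  have := Finset.card_le_card this
  simpa [g, Finset.card_erase_of_mem] using this

lemma image_g {y : Fin (m + 1) → ℝ} (hy : Function.Injective y) :
    Finset.univ.image (fun i => g i y) = Finset.range (m + 1) := by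
  apply Finset.eq_of_subset_of_card_le
  · intro k hk
    simp only [Finset.mem_image, Finset.mem_univ, true_and] at hk
    obtain ⟨i, rfl⟩ := hk
    simpa [Finset.mem_range, Nat.lt_succ_iff] using g_le i y
  · rw [Finset.card_range, Finset.card_image_of_injective _ (g_inj hy), Finset.card_univ,
      Fintype.card_fin]

lemma count_g {y : Fin (m + 1) → ℝ} (hy : Function.Injective y)
    (p : ℕ → Prop) [DecidablePred p] :
    (Finset.univ.filter fun i => p (g i y)).card
      = ((Finset.range (m + 1)).filter p).card := by
  rw [← image_g hy, Finset.filter_image,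
    Finset.card_image_of_injective _ (g_inj hy)]

lemma g_comp (π : Equiv.Perm (Fin (m + 1))) (i : Fin (m + 1)) (y : Fin (m + 1) → ℝ) :
    g i (y ∘ π) = g (π i) y := by
  unfold g
  rw [Finset.card_filter, Finset.card_filter]
  exact Equiv.sum_comp π (fun j => if y (π i) < y j then 1 else 0)

lemma g_zero_cons (a : ℝ) (b : Fin m → ℝ) :
    g 0 (Fin.cons a b) = (Finset.univ.filter fun j : Fin m => a < b j).card := by
  unfold g
  rw [Finset.card_filter, Finset.card_filter, Fin.sum_univ_succ]
  simp

lemma g_measurable (i : Fin (m + 1)) : Measurable (g i) := by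
  unfold g
  simp_rw [Finset.card_filter]
  apply Finset.measurable_sum
  intro j _
  exact Measurable.ite (measurableSet_lt (measurable_pi_apply i) (measurable_pi_apply j))
    measurable_const measurable_const

lemma inj_measurable : MeasurableSet {y : Fin (m + 1) → ℝ | Function.Injective y} := by
  have : {y : Fin (m + 1) → ℝ | Function.Injective y}
      = ⋂ i, ⋂ j, {y | y i = y j → i = j} := by
    ext y; simp [Function.Injective, Set.mem_iInter]
  rw [this]
  refine MeasurableSet.iInter fun i => MeasurableSet.iInter fun j => ?_
  by_cases h : i = j
  · simp [h]
  · have : {y : Fin (m + 1) → ℝ | y i = y j → i = j} = {y | y i = y j}ᶜ := by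
      ext y; simp [h]
    rw [this]
    exact (measurableSet_eq_fun (measurable_pi_apply i) (measurable_pi_apply j)).compl

end Stmt4Aux

open Stmt4Aux in
theorem stmt4 {Ω : Type*} [MeasurableSpace Ω] (μ : Measure Ω) [IsProbabilityMeasure μ]
    {m : ℕ} (T : Ω → ℝ) (Ts : Fin m → Ω → ℝ)
    (hT : Measurable T) (hTs : ∀ i, Measurable (Ts i))
    (hexch : ∀ π : Equiv.Perm (Fin (m + 1)),
      Measure.map (fun ω => (Fin.cons (T ω) (fun j => Ts j ω) : Fin (m + 1) → ℝ) ∘ π) μ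
        = Measure.map (fun ω => (Fin.cons (T ω) (fun j => Ts j ω) : Fin (m + 1) → ℝ)) μ)
    (hdist : ∀ᵐ ω ∂μ,
      Function.Injective (Fin.cons (T ω) (fun j => Ts j ω) : Fin (m + 1) → ℝ)) :
    ∀ α : ℝ, 0 ≤ α → α ≤ 1 →
      μ {ω | (1 + ((Finset.univ.filter fun i => T ω < Ts i ω).card : ℝ)) / (m + 1) ≤ α}
        ≤ ENNReal.ofReal α := by
  intro α hα0 hα1
  classical
  set X : Ω → (Fin (m + 1) → ℝ) := fun ω => Fin.cons (T ω) (fun j => Ts j ω) with hXdef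
  have hX : Measurable X := by
    apply measurable_pi_lambda
    intro j
    refine Fin.cases ?_ ?_ j
    · simpa [hXdef] using hT
    · intro i; simpa [hXdef] using hTs i
  set ν : Measure (Fin (m + 1) → ℝ) := μ.map X with hνdef
  have hνprob : IsProbabilityMeasure ν := Measure.isProbabilityMeasure_map hX.aemeasurable
  set p : ℕ → Prop := fun n => (1 + (n : ℝ)) / ((m : ℝ) + 1) ≤ α with hpdef
  set A : Fin (m + 1) → Set (Fin (m + 1) → ℝ) := fun i => {y | p (g i y)} with hAdef
  have hA : ∀ i, MeasurableSet (A i) := by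
    intro i
    exact (Stmt4Aux.g_measurable i) (by trivial : MeasurableSet {n : ℕ | p n})
  have hcomp : ∀ π : Equiv.Perm (Fin (m + 1)),
      Measurable (fun y : Fin (m + 1) → ℝ => y ∘ π) := fun π =>
    measurable_pi_lambda _ fun j => measurable_pi_apply (π j)
  have hinv : ∀ π : Equiv.Perm (Fin (m + 1)), ν.map (fun y => y ∘ π) = ν := by
    intro π
    rw [show ν = μ.map X from rfl, Measure.map_map (hcomp π) hX]
    exact hexch π
  have hAi : ∀ i, ν (A i) = ν (A 0) := by
    intro i
    have hπ : A i = (fun y => y ∘ Equiv.swap (0 : Fin (m + 1)) i) ⁻¹' A 0 := by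
      ext y
      simp only [Set.mem_preimage, hAdef, Set.mem_setOf_eq, Stmt4Aux.g_comp]
      rw [Equiv.swap_apply_left]
    rw [hπ, ← Measure.map_apply (hcomp _) (hA 0), hinv _]
  have hνinj : ∀ᵐ y ∂ν, Function.Injective y := by
    rw [hνdef, MeasureTheory.ae_map_iff hX.aemeasurable Stmt4Aux.inj_measurable]
    exact hdist
  set N : ℕ := ((Finset.range (m + 1)).filter p).card with hNdef
  have key : ((m : ℝ≥0∞) + 1) * ν (A 0) = N := by
    calc ((m : ℝ≥0∞) + 1) * ν (A 0) = ∑ _i : Fin (m + 1), ν (A 0) := by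
          simp [Finset.sum_const, mul_comm]
      _ = ∑ i : Fin (m + 1), ν (A i) := by
          exact Finset.sum_congr rfl fun i _ => (hAi i).symm
      _ = ∑ i : Fin (m + 1), ∫⁻ y, (A i).indicator 1 y ∂ν := by
          refine Finset.sum_congr rfl fun i _ => ?_
          rw [lintegral_indicator_one (hA i)]
      _ = ∫⁻ y, ∑ i : Fin (m + 1), (A i).indicator 1 y ∂ν := by
          rw [lintegral_finset_sum]
          intro i _
          exact (measurable_const.indicator (hA i))
      _ = ∫⁻ _y, (N : ℝ≥0∞) ∂ν := by
          refine lintegral_congr_ae ?_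
          filter_upwards [hνinj] with y hy
          have : ∑ i : Fin (m + 1), (A i).indicator (1 : (Fin (m + 1) → ℝ) → ℝ≥0∞) y
              = ((Finset.univ.filter fun i => p (g i y)).card : ℝ≥0∞) := by
            rw [Finset.card_filter]
            push_cast
            refine Finset.sum_congr rfl fun i _ => ?_
            by_cases h : p (g i y) <;> simp [Set.indicator_apply, hAdef, h, Pi.one_apply]
          rw [this, Stmt4Aux.count_g hy p]
      _ = N := by simp
  have hNle : (N : ℝ) ≤ ((m : ℝ) + 1) * α := by
    rcases Nat.eq_zero_or_pos N with h0 | hpos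
    · simpa [h0] using mul_nonneg (by positivity : (0:ℝ) ≤ (m:ℝ)+1) hα0
    · have hne : ((Finset.range (m + 1)).filter p).Nonempty := Finset.card_pos.mp hpos
      set K := ((Finset.range (m + 1)).filter p).max' hne with hKdef
      have hK : p K := (Finset.mem_filter.mp (Finset.max'_mem _ hne)).2
      have hsub : (Finset.range (m + 1)).filter p ⊆ Finset.range (K + 1) := by
        intro k hk
        rw [Finset.mem_range, Nat.lt_succ_iff]
        exact Finset.le_max' _ _ hk
      have hcard : N ≤ K + 1 := by
        simpa using Finset.card_le_card hsub
      have hm : (0 : ℝ) < (m : ℝ) + 1 := by positivity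
      have h2 : 1 + (K : ℝ) ≤ α * ((m : ℝ) + 1) := (div_le_iff₀ hm).mp hK
      calc (N : ℝ) ≤ (K : ℝ) + 1 := by exact_mod_cast hcard
        _ = 1 + K := by ring
        _ ≤ α * ((m : ℝ) + 1) := h2
        _ = ((m : ℝ) + 1) * α := by ring
  have hE : μ {ω | (1 + ((Finset.univ.filter fun i => T ω < Ts i ω).card : ℝ)) / (m + 1) ≤ α}
      = ν (A 0) := by
    rw [hνdef, Measure.map_apply hX (hA 0)]
    congr 1
    ext ω
    simp only [Set.mem_setOf_eq, Set.mem_preimage, hAdef, hXdef, Stmt4Aux.g_zero_cons, hpdef]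
  rw [hE]
  have hmul : ((m : ℝ≥0∞) + 1) * ν (A 0) ≤ ((m : ℝ≥0∞) + 1) * ENNReal.ofReal α := by
    rw [key]
    calc (N : ℝ≥0∞) = ENNReal.ofReal (N : ℝ) := by simp
      _ ≤ ENNReal.ofReal (((m : ℝ) + 1) * α) := ENNReal.ofReal_le_ofReal hNle
      _ = ENNReal.ofReal ((m : ℝ) + 1) * ENNReal.ofReal α := by
          rw [ENNReal.ofReal_mul (by positivity)]
      _ = ((m : ℝ≥0∞) + 1) * ENNReal.ofReal α := by
          congr 1
          rw [ENNReal.ofReal_add (by positivity) (by norm_num)]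
          simp
  have hne0 : ((m : ℝ≥0∞) + 1) ≠ 0 := by simp
  have hnetop : ((m : ℝ≥0∞) + 1) ≠ ⊤ := by simp [ENNReal.add_ne_top]
  exact (ENNReal.mul_le_mul_iff_right hne0 hnetop).mp hmul
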